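/- arXiv:0805.4782 — 3 statements merged into one kernel-verified Lean document; each statement's English description precedes it below -/
import Mathlib

section
/- Let p be an odd prime and define the following permutations in S_{2p} (acting on {1,…,2p}): φ₁ = ∏_{i=1}^{p}(i, i+p); φ₂ = [∏_{i=1}^{p-1}(i, i+p+1)]·(p, p+1); φ₃ = (1, p+1)·∏_{i=2}^{p}(i, 2p+2−i); φ₄ = (1, p+2)(2, p+1)·∏_{i=3}^{p}(i, 2p+3−i). Then each φ_k is an involution, φ₁φ₂ and φ₃φ₄ both have order p, every element of ⟨φ₁,φ₂⟩ commutes with every element of ⟨φ₃,φ₄⟩, and the subgroup ⟨φ₁,φ₂,φ₃,φ₄⟩ of S_{2p} is isomorphic to D_p × D_p (in particular it has order 4p²). -/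
/- We model the set {1, …, 2p} as `Bool × ZMod p`, where `(false, i)` stands for the
point `i ∈ {1, …, p}` (mod p) and `(true, j)` stands for `p + j`.  Under this
identification the permutations of the paper are:
`φ₁ = ∏ (i, i+p)`, `φ₂ = [∏_{i<p} (i, i+p+1)]·(p, p+1)`,
`φ₃ = (1, p+1)·∏_{i≥2} (i, 2p+2−i)`, `φ₄ = (1, p+2)(2, p+1)·∏_{i≥3} (i, 2p+3−i)`. -/

def phi1fun (p : ℕ) : Bool × ZMod p → Bool × ZMod p := fun x => (!x.1, x.2)

def phi2fun (p : ℕ) : Bool × ZMod p → Bool × ZMod p :=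
  fun x => if x.1 then (false, x.2 - 1) else (true, x.2 + 1)

def phi3fun (p : ℕ) : Bool × ZMod p → Bool × ZMod p := fun x => (!x.1, 2 - x.2)

def phi4fun (p : ℕ) : Bool × ZMod p → Bool × ZMod p := fun x => (!x.1, 3 - x.2)

theorem phi1fun_inv (p : ℕ) : Function.Involutive (phi1fun p) := by
  intro x; simp [phi1fun]

theorem phi2fun_inv (p : ℕ) : Function.Involutive (phi2fun p) := by
  rintro ⟨b, i⟩; cases b <;> simp [phi2fun]

theorem phi3fun_inv (p : ℕ) : Function.Involutive (phi3fun p) := by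
  intro x; simp [phi3fun]

theorem phi4fun_inv (p : ℕ) : Function.Involutive (phi4fun p) := by
  intro x; simp [phi4fun]

/-- `φ₁` as a permutation of the `2p`-element set. -/
def phi1 (p : ℕ) : Equiv.Perm (Bool × ZMod p) := (phi1fun_inv p).toPerm

/-- `φ₂` as a permutation of the `2p`-element set. -/
def phi2 (p : ℕ) : Equiv.Perm (Bool × ZMod p) := (phi2fun_inv p).toPerm

/-- `φ₃` as a permutation of the `2p`-element set. -/
def phi3 (p : ℕ) : Equiv.Perm (Bool × ZMod p) := (phi3fun_inv p).toPerm

/-- `φ₄` as a permutation of the `2p`-element set. -/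
def phi4 (p : ℕ) : Equiv.Perm (Bool × ZMod p) := (phi4fun_inv p).toPerm


namespace Stmt10Aux

open DihedralGroup Equiv

variable (p : ℕ)

/-- rotation-type element of the first dihedral factor -/
def Arot (k : ZMod p) : Equiv.Perm (Bool × ZMod p) where
  toFun x := (x.1, x.2 + if x.1 then -k else k)
  invFun x := (x.1, x.2 - if x.1 then -k else k)
  left_inv := by rintro ⟨b, x⟩; cases b <;> simp
  right_inv := by rintro ⟨b, x⟩; cases b <;> simp

/-- reflection-type element of the first dihedral factor -/
def Aref (k : ZMod p) : Equiv.Perm (Bool × ZMod p) where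
  toFun x := (!x.1, x.2 + if x.1 then -k else k)
  invFun x := (!x.1, x.2 + if x.1 then -k else k)
  left_inv := by rintro ⟨b, x⟩; cases b <;> simp
  right_inv := by rintro ⟨b, x⟩; cases b <;> simp

/-- rotation-type element of the second dihedral factor -/
def Brot (k : ZMod p) : Equiv.Perm (Bool × ZMod p) where
  toFun x := (x.1, x.2 - k)
  invFun x := (x.1, x.2 + k)
  left_inv := by rintro ⟨b, x⟩; simp
  right_inv := by rintro ⟨b, x⟩; simp

/-- reflection-type element of the second dihedral factor -/
def Bref (k : ZMod p) : Equiv.Perm (Bool × ZMod p) where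
  toFun x := (!x.1, 2 - x.2 + k)
  invFun x := (!x.1, 2 - x.2 + k)
  left_inv := by rintro ⟨b, x⟩; simp; ring
  right_inv := by rintro ⟨b, x⟩; simp; ring

@[simp] theorem Arot_apply (k : ZMod p) (x) :
    Arot p k x = (x.1, x.2 + if x.1 then -k else k) := rfl
@[simp] theorem Aref_apply (k : ZMod p) (x) :
    Aref p k x = (!x.1, x.2 + if x.1 then -k else k) := rfl
@[simp] theorem Brot_apply (k : ZMod p) (x) :
    Brot p k x = (x.1, x.2 - k) := rfl
@[simp] theorem Bref_apply (k : ZMod p) (x) :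
    Bref p k x = (!x.1, 2 - x.2 + k) := rfl

def psi1fun : DihedralGroup p → Equiv.Perm (Bool × ZMod p)
  | .r k => Arot p k
  | .sr k => Aref p k

def psi2fun : DihedralGroup p → Equiv.Perm (Bool × ZMod p)
  | .r k => Brot p k
  | .sr k => Bref p k

@[simp] theorem psi1fun_r (k : ZMod p) : psi1fun p (r k) = Arot p k := rfl
@[simp] theorem psi1fun_sr (k : ZMod p) : psi1fun p (sr k) = Aref p k := rfl
@[simp] theorem psi2fun_r (k : ZMod p) : psi2fun p (r k) = Brot p k := rfl
@[simp] theorem psi2fun_sr (k : ZMod p) : psi2fun p (sr k) = Bref p k := rfl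

def psi1 : DihedralGroup p →* Equiv.Perm (Bool × ZMod p) where
  toFun := psi1fun p
  map_one' := by
    show psi1fun p (r 0) = 1
    rw [psi1fun_r]
    ext ⟨b, x⟩ <;> cases b <;> simp
  map_mul' := by
    rintro (i | i) (j | j) <;>
      · ext ⟨b, x⟩ <;> cases b <;> simp <;> ring

def psi2 : DihedralGroup p →* Equiv.Perm (Bool × ZMod p) where
  toFun := psi2fun p
  map_one' := by
    show psi2fun p (r 0) = 1
    rw [psi2fun_r]
    ext ⟨b, x⟩ <;> cases b <;> simp
  map_mul' := by
    rintro (i | i) (j | j) <;>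
      · ext ⟨b, x⟩ <;> cases b <;> simp <;> ring

@[simp] theorem psi1_r (k : ZMod p) : psi1 p (r k) = Arot p k := rfl
@[simp] theorem psi1_sr (k : ZMod p) : psi1 p (sr k) = Aref p k := rfl
@[simp] theorem psi2_r (k : ZMod p) : psi2 p (r k) = Brot p k := rfl
@[simp] theorem psi2_sr (k : ZMod p) : psi2 p (sr k) = Bref p k := rfl

theorem psi_commute : ∀ g h, Commute (psi1 p g) (psi2 p h) := by
  rintro (i | i) (j | j) <;>
    · apply Equiv.ext
      rintro ⟨b, x⟩
      cases b <;> simp [Commute, SemiconjBy, Equiv.Perm.mul_apply] <;> ring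

/-- the combined homomorphism `D_p × D_p →* Perm (Bool × ZMod p)` -/
def bigF : DihedralGroup p × DihedralGroup p →* Equiv.Perm (Bool × ZMod p) :=
  (psi1 p).noncommCoprod (psi2 p) (psi_commute p)

theorem phi1_eq : phi1 p = psi1 p (sr 0) := by
  ext ⟨b, x⟩ <;> cases b <;> simp [phi1, phi1fun]

theorem phi2_eq : phi2 p = psi1 p (sr 1) := by
  ext ⟨b, x⟩ <;> cases b <;> simp [phi2, phi2fun, sub_eq_add_neg]

theorem phi3_eq : phi3 p = psi2 p (sr 0) := by
  ext ⟨b, x⟩ <;> cases b <;> simp [phi3, phi3fun]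

theorem phi4_eq : phi4 p = psi2 p (sr 1) := by
  ext ⟨b, x⟩ <;> cases b <;> simp [phi4, phi4fun] <;> ring

theorem bigF_left (g : DihedralGroup p) : bigF p (g, 1) = psi1 p g := by
  simp [bigF, MonoidHom.noncommCoprod_apply]

theorem bigF_right (h : DihedralGroup p) : bigF p (1, h) = psi2 p h := by
  simp [bigF, MonoidHom.noncommCoprod_apply]

theorem two_ne_zero' (hp : p.Prime) (hodd : Odd p) : (2 : ZMod p) ≠ 0 := by
  haveI : NeZero p := ⟨hp.pos.ne'⟩
  intro h
  have h2 : ((2 : ℕ) : ZMod p) = 0 := by exact_mod_cast h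
  rw [ZMod.natCast_eq_zero_iff] at h2
  have := (Nat.prime_dvd_prime_iff_eq hp Nat.prime_two).mp h2
  subst this
  rcases hodd with ⟨m, hm⟩
  omega

theorem bigF_injective (hp : p.Prime) (hodd : Odd p) : Function.Injective (bigF p) := by
  haveI : Fact p.Prime := ⟨hp⟩
  have h2 := two_ne_zero' p hp hodd
  rw [injective_iff_map_eq_one]
  rintro ⟨(i | i), (j | j)⟩ h
  · -- (r i, r j)
    have e0 := DFunLike.congr_fun h (false, 0)
    have e1 := DFunLike.congr_fun h (true, 0)
    simp [bigF, MonoidHom.noncommCoprod_apply, Equiv.Perm.mul_apply] at e0 e1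
    -- e0 : 0 - j + i = 0, e1 : 0 - j + -i = 0
    have hi : i = 0 := by
      have : 2 * i = 0 := by linear_combination e0 - e1
      rcases mul_eq_zero.mp this with h | h
      · exact absurd h h2
      · exact h
    have hj : j = 0 := by
      rw [hi] at e0; linear_combination -e0
    rw [hi, hj]
    rfl
  · -- (r i, sr j)
    have e0 := DFunLike.congr_fun h (false, 0)
    simp [bigF, MonoidHom.noncommCoprod_apply, Equiv.Perm.mul_apply] at e0
  · -- (sr i, r j)
    have e0 := DFunLike.congr_fun h (false, 0)
    simp [bigF, MonoidHom.noncommCoprod_apply, Equiv.Perm.mul_apply] at e0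
  · -- (sr i, sr j)
    have e0 := DFunLike.congr_fun h (false, 0)
    have e1 := DFunLike.congr_fun h (false, 1)
    simp [bigF, MonoidHom.noncommCoprod_apply, Equiv.Perm.mul_apply] at e0 e1
    -- e0 : 2 - (2 - 0 + j) + i ... careful; extract ZMod equations
    exact absurd (by linear_combination e0 - e1 : (2 : ZMod p) = 0) h2

theorem gen_top [NeZero p] :
    Subgroup.closure ({((sr 0 : DihedralGroup p), (1 : DihedralGroup p)),
      (sr 1, 1), (1, sr 0), (1, sr 1)} : Set (DihedralGroup p × DihedralGroup p)) = ⊤ := by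
  set S : Set (DihedralGroup p × DihedralGroup p) :=
    {((sr 0 : DihedralGroup p), (1 : DihedralGroup p)), (sr 1, 1), (1, sr 0), (1, sr 1)} with hS
  have m1 : ((sr 0 : DihedralGroup p), (1 : DihedralGroup p)) ∈ Subgroup.closure S :=
    Subgroup.subset_closure (by simp [hS])
  have m2 : ((sr 1 : DihedralGroup p), (1 : DihedralGroup p)) ∈ Subgroup.closure S :=
    Subgroup.subset_closure (by simp [hS])
  have m3 : ((1 : DihedralGroup p), (sr 0 : DihedralGroup p)) ∈ Subgroup.closure S :=
    Subgroup.subset_closure (by simp [hS])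
  have m4 : ((1 : DihedralGroup p), (sr 1 : DihedralGroup p)) ∈ Subgroup.closure S :=
    Subgroup.subset_closure (by simp [hS])
  have hr1 : ((r 1 : DihedralGroup p), (1 : DihedralGroup p)) ∈ Subgroup.closure S := by
    have := mul_mem m1 m2
    simpa using this
  have hr2 : ((1 : DihedralGroup p), (r 1 : DihedralGroup p)) ∈ Subgroup.closure S := by
    have := mul_mem m3 m4
    simpa using this
  have hrk1 : ∀ k : ZMod p, ((r k : DihedralGroup p), (1 : DihedralGroup p))
      ∈ Subgroup.closure S := by
    intro k
    have := pow_mem hr1 k.val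
    simpa [Prod.pow_mk, r_one_pow, ZMod.natCast_val, ZMod.cast_id] using this
  have hrk2 : ∀ k : ZMod p, ((1 : DihedralGroup p), (r k : DihedralGroup p))
      ∈ Subgroup.closure S := by
    intro k
    have := pow_mem hr2 k.val
    simpa [Prod.pow_mk, r_one_pow, ZMod.natCast_val, ZMod.cast_id] using this
  have hg1 : ∀ g : DihedralGroup p, (g, (1 : DihedralGroup p)) ∈ Subgroup.closure S := by
    rintro (k | k)
    · exact hrk1 k
    · have := mul_mem m1 (hrk1 k)
      simpa using this
  have hg2 : ∀ g : DihedralGroup p, ((1 : DihedralGroup p), g) ∈ Subgroup.closure S := by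
    rintro (k | k)
    · exact hrk2 k
    · have := mul_mem m3 (hrk2 k)
      simpa using this
  rw [eq_top_iff]
  rintro ⟨g, h⟩ -
  have := mul_mem (hg1 g) (hg2 h)
  simpa using this

theorem closure_eq_range (hp : p.Prime) :
    Subgroup.closure {phi1 p, phi2 p, phi3 p, phi4 p} = (bigF p).range := by
  haveI : NeZero p := ⟨hp.pos.ne'⟩
  rw [MonoidHom.range_eq_map, ← gen_top p, MonoidHom.map_closure]
  congr 1
  simp only [Set.image_insert_eq, Set.image_singleton, bigF_left, bigF_right,
    ← phi1_eq, ← phi2_eq, ← phi3_eq, ← phi4_eq]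

end Stmt10Aux

/-- each `φ_k` is an involution, `φ₁φ₂` and `φ₃φ₄` have order `p`,
every element of `⟨φ₁,φ₂⟩` commutes with every element of `⟨φ₃,φ₄⟩`, and
`⟨φ₁,φ₂,φ₃,φ₄⟩ ≅ D_p × D_p`; in particular this subgroup has order `4p²`. -/
theorem stmt10 (p : ℕ) (hp : p.Prime) (hodd : Odd p) :
    (orderOf (phi1 p) = 2 ∧ orderOf (phi2 p) = 2 ∧
      orderOf (phi3 p) = 2 ∧ orderOf (phi4 p) = 2) ∧
    orderOf (phi1 p * phi2 p) = p ∧ orderOf (phi3 p * phi4 p) = p ∧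
    (∀ x ∈ Subgroup.closure {phi1 p, phi2 p}, ∀ y ∈ Subgroup.closure {phi3 p, phi4 p},
      Commute x y) ∧
    Nonempty (↥(Subgroup.closure {phi1 p, phi2 p, phi3 p, phi4 p})
      ≃* DihedralGroup p × DihedralGroup p) ∧
    Nat.card ↥(Subgroup.closure {phi1 p, phi2 p, phi3 p, phi4 p}) = 4 * p ^ 2 := by
  classical
  open Stmt10Aux DihedralGroup in
  haveI : Fact p.Prime := ⟨hp⟩
  haveI : NeZero p := ⟨hp.pos.ne'⟩
  haveI : Fact (Nat.Prime 2) := ⟨Nat.prime_two⟩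
  have hone : (1 : ZMod p) ≠ 0 := one_ne_zero
  -- involutions of order 2
  have ho1 : orderOf (phi1 p) = 2 := by
    apply orderOf_eq_prime
    · ext ⟨b, x⟩ <;> cases b <;> simp [sq, Equiv.Perm.mul_apply, phi1, phi1fun]
    · intro h
      have := DFunLike.congr_fun h (false, (0 : ZMod p))
      simp [phi1, phi1fun] at this
  have ho2 : orderOf (phi2 p) = 2 := by
    apply orderOf_eq_prime
    · ext ⟨b, x⟩ <;> cases b <;> simp [sq, Equiv.Perm.mul_apply, phi2, phi2fun]
    · intro h
      have := DFunLike.congr_fun h (false, (0 : ZMod p))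
      simp [phi2, phi2fun] at this
  have ho3 : orderOf (phi3 p) = 2 := by
    apply orderOf_eq_prime
    · ext ⟨b, x⟩ <;> cases b <;> simp [sq, Equiv.Perm.mul_apply, phi3, phi3fun]
    · intro h
      have := DFunLike.congr_fun h (false, (0 : ZMod p))
      simp [phi3, phi3fun] at this
  have ho4 : orderOf (phi4 p) = 2 := by
    apply orderOf_eq_prime
    · ext ⟨b, x⟩ <;> cases b <;> simp [sq, Equiv.Perm.mul_apply, phi4, phi4fun]
    · intro h
      have := DFunLike.congr_fun h (false, (0 : ZMod p))
      simp [phi4, phi4fun] at this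
  -- the two rotations of order p
  have e12 : phi1 p * phi2 p = psi1 p (r 1) := by
    rw [phi1_eq, phi2_eq, ← map_mul, sr_mul_sr, sub_zero]
  have e34 : phi3 p * phi4 p = psi2 p (r 1) := by
    rw [phi3_eq, phi4_eq, ← map_mul, sr_mul_sr, sub_zero]
  have hop1 : orderOf (phi1 p * phi2 p) = p := by
    rw [e12]
    apply orderOf_eq_prime
    · rw [← map_pow, r_one_pow_n, map_one]
    · intro h
      have := DFunLike.congr_fun h (false, (0 : ZMod p))
      simp at this
  have hop2 : orderOf (phi3 p * phi4 p) = p := by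
    rw [e34]
    apply orderOf_eq_prime
    · rw [← map_pow, r_one_pow_n, map_one]
    · intro h
      have := DFunLike.congr_fun h (false, (0 : ZMod p))
      simp at this
  -- commuting subgroups
  have hc2 : Subgroup.closure {phi3 p, phi4 p} ≤
      Subgroup.centralizer {phi1 p, phi2 p} := by
    rw [Subgroup.closure_le]
    rintro y hy
    rw [SetLike.mem_coe, Subgroup.mem_centralizer_iff]
    rintro g hg
    rcases hg with rfl | rfl <;> rcases hy with rfl | rfl <;>
      simp only [phi1_eq, phi2_eq, phi3_eq, phi4_eq] <;>
      exact psi_commute p _ _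
  have hcomm : ∀ x ∈ Subgroup.closure {phi1 p, phi2 p},
      ∀ y ∈ Subgroup.closure {phi3 p, phi4 p}, Commute x y := by
    have hc1 : Subgroup.closure {phi1 p, phi2 p} ≤
        Subgroup.centralizer (Subgroup.closure {phi3 p, phi4 p} : Subgroup _) := by
      rw [Subgroup.closure_le]
      intro u hu
      rw [SetLike.mem_coe, Subgroup.mem_centralizer_iff]
      intro y hy
      exact (Subgroup.mem_centralizer_iff.mp (hc2 hy) u hu).symm
    intro x hx y hy
    exact ((Subgroup.mem_centralizer_iff.mp (hc1 hx)) y hy).symm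
  -- the isomorphism with D_p × D_p
  have hinj := bigF_injective p hp hodd
  have hrange := closure_eq_range p hp
  have e : ↥(Subgroup.closure {phi1 p, phi2 p, phi3 p, phi4 p})
      ≃* DihedralGroup p × DihedralGroup p :=
    (MulEquiv.subgroupCongr hrange).trans (MonoidHom.ofInjective hinj).symm
  refine ⟨⟨ho1, ho2, ho3, ho4⟩, hop1, hop2, hcomm, ⟨e⟩, ?_⟩
  rw [Nat.card_congr e.toEquiv, Nat.card_prod, DihedralGroup.nat_card]
  ring
end

section
/- Let p be an odd prime and G ≤ S_{2p} the group generated by φ₁, φ₂, φ₃, φ₄ as above (isomorphic to D_p × D_p). Consider the induced action of G on the set of pairs P_{ij} = {i, p+j} for 1 ≤ i, j ≤ p. Then G acts transitively on these p² pairs, and the stabilizer of P_{11} = {1, p+1} is ⟨φ₁, φ₃⟩, a Klein four group. -/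
/-- The pair `P_{ij} = {x_i, y_j} = {i, p+j}`. -/
def pairP (p : ℕ) (i j : ZMod p) : Set (Bool × ZMod p) := {(false, i), (true, j)}

/-- the "affine" permutations containing G -/
def isAff (p : ℕ) (g : Equiv.Perm (Bool × ZMod p)) : Prop :=
  ∃ (c : Bool) (e a b : ZMod p), e * e = 1 ∧
    (∀ i, g (false, i) = (c, e * i + a)) ∧ (∀ i, g (true, i) = (!c, e * i + b))

theorem isAff_one (p : ℕ) : isAff p 1 := by
  refine ⟨false, 1, 0, 0, by ring, fun i => ?_, fun i => ?_⟩ <;> simp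

theorem isAff_mul (p : ℕ) {g h : Equiv.Perm (Bool × ZMod p)} (hg : isAff p g)
    (hh : isAff p h) : isAff p (g * h) := by
  obtain ⟨c, e, a, b, he, h1, h2⟩ := hg
  obtain ⟨c', e', a', b', he', h1', h2'⟩ := hh
  cases c' with
  | false =>
    refine ⟨c, e * e', e * a' + a, e * b' + b, by rw [mul_mul_mul_comm, he, he', mul_one],
      fun i => ?_, fun i => ?_⟩ <;>
    · simp only [Equiv.Perm.mul_apply, h1', h2', h1, h2, Bool.not_false, Bool.not_true]
      ring_nf
  | true =>
    refine ⟨!c, e * e', e * a' + b, e * b' + a, by rw [mul_mul_mul_comm, he, he', mul_one],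
      fun i => ?_, fun i => ?_⟩ <;>
    · simp only [Equiv.Perm.mul_apply, h1', h2', h1, h2, Bool.not_false, Bool.not_true,
        Bool.not_not]
      ring_nf

theorem isAff_inv (p : ℕ) {g : Equiv.Perm (Bool × ZMod p)} (hg : isAff p g) :
    isAff p g⁻¹ := by
  obtain ⟨c, e, a, b, he, h1, h2⟩ := hg
  have key : ∀ (x y : Bool × ZMod p), g y = x → g⁻¹ x = y := by
    intro x y hxy; rw [← hxy]; exact g.symm_apply_apply y
  cases c with
  | false =>
    simp only [Bool.not_false] at h2
    refine ⟨false, e, -(e * a), -(e * b), he, fun i => key _ _ ?_, fun i => key _ _ ?_⟩ <;>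
      try simp only [Bool.not_false, Bool.not_true]
    · rw [h1]; simp only [Prod.mk.injEq, true_and]; linear_combination (i - a) * he
    · rw [h2]; simp only [Prod.mk.injEq, true_and]; linear_combination (i - b) * he
  | true =>
    simp only [Bool.not_true] at h2
    refine ⟨true, e, -(e * b), -(e * a), he, fun i => key _ _ ?_, fun i => key _ _ ?_⟩ <;>
      try simp only [Bool.not_false, Bool.not_true]
    · rw [h2]; simp only [Prod.mk.injEq, true_and]; linear_combination (i - b) * he
    · rw [h1]; simp only [Prod.mk.injEq, true_and]; linear_combination (i - a) * he

def affSub (p : ℕ) : Subgroup (Equiv.Perm (Bool × ZMod p)) where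
  carrier := {g | isAff p g}
  one_mem' := isAff_one p
  mul_mem' := isAff_mul p
  inv_mem' := isAff_inv p

theorem aff_phi1 (p : ℕ) : isAff p (phi1 p) :=
  ⟨true, 1, 0, 0, by ring, fun i => by simp [phi1, phi1fun], fun i => by simp [phi1, phi1fun]⟩

theorem aff_phi2 (p : ℕ) : isAff p (phi2 p) :=
  ⟨true, 1, 1, -1, by ring, fun i => by simp [phi2, phi2fun],
    fun i => by simp [phi2, phi2fun]; ring⟩

theorem aff_phi3 (p : ℕ) : isAff p (phi3 p) :=
  ⟨true, -1, 2, 2, by ring, fun i => by simp [phi3, phi3fun]; ring,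
    fun i => by simp [phi3, phi3fun]; ring⟩

theorem aff_phi4 (p : ℕ) : isAff p (phi4 p) :=
  ⟨true, -1, 3, 3, by ring, fun i => by simp [phi4, phi4fun]; ring,
    fun i => by simp [phi4, phi4fun]; ring⟩

theorem closure_le_aff (p : ℕ) :
    Subgroup.closure {phi1 p, phi2 p, phi3 p, phi4 p} ≤ affSub p := by
  rw [Subgroup.closure_le]
  rintro g (rfl | rfl | rfl | rfl)
  exacts [aff_phi1 p, aff_phi2 p, aff_phi3 p, aff_phi4 p]

theorem sigma_apply (p : ℕ) (b : Bool) (i : ZMod p) :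
    (phi4 p * phi3 p) (b, i) = (b, i + 1) := by
  simp only [Equiv.Perm.mul_apply, phi3, phi4, Function.Involutive.coe_toPerm,
    phi3fun, phi4fun, Bool.not_not]
  exact Prod.ext rfl (by ring)

theorem sigma_pow (p : ℕ) (n : ℕ) (b : Bool) (i : ZMod p) :
    ((phi4 p * phi3 p) ^ n) (b, i) = (b, i + n) := by
  induction n with
  | zero => simp
  | succ n ih =>
    rw [pow_succ', Equiv.Perm.mul_apply, sigma_apply, ih]
    exact Prod.ext rfl (by push_cast; ring)

theorem tau_apply_false (p : ℕ) (i : ZMod p) :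
    (phi2 p * phi1 p) (false, i) = (false, i - 1) := by
  simp [phi1, phi2, phi1fun, phi2fun]

theorem tau_apply_true (p : ℕ) (i : ZMod p) :
    (phi2 p * phi1 p) (true, i) = (true, i + 1) := by
  simp [phi1, phi2, phi1fun, phi2fun]

theorem tau_pow_false (p : ℕ) (n : ℕ) (i : ZMod p) :
    ((phi2 p * phi1 p) ^ n) (false, i) = (false, i - n) := by
  induction n with
  | zero => simp
  | succ n ih =>
    rw [pow_succ', Equiv.Perm.mul_apply, ih, tau_apply_false]
    exact Prod.ext rfl (by push_cast; ring)

theorem tau_pow_true (p : ℕ) (n : ℕ) (i : ZMod p) :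
    ((phi2 p * phi1 p) ^ n) (true, i) = (true, i + n) := by
  induction n with
  | zero => simp
  | succ n ih =>
    rw [pow_succ', Equiv.Perm.mul_apply, ih, tau_apply_true]
    exact Prod.ext rfl (by push_cast; ring)

theorem phi13_comm (p : ℕ) : phi1 p * phi3 p = phi3 p * phi1 p := by
  apply Equiv.ext; rintro ⟨b, i⟩
  simp [phi1, phi3, phi1fun, phi3fun]

theorem phi1_sq (p : ℕ) : phi1 p * phi1 p = 1 := by
  apply Equiv.ext; intro x
  simp only [Equiv.Perm.mul_apply, phi1, Function.Involutive.coe_toPerm,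
    Equiv.Perm.one_apply]
  exact phi1fun_inv p x

theorem phi3_sq (p : ℕ) : phi3 p * phi3 p = 1 := by
  apply Equiv.ext; intro x
  simp only [Equiv.Perm.mul_apply, phi3, Function.Involutive.coe_toPerm,
    Equiv.Perm.one_apply]
  exact phi3fun_inv p x

theorem pow_mod_two {G : Type*} [Group G] {g : G} (h : g * g = 1) (m : ℕ) :
    g ^ m = g ^ (m % 2) := by
  conv_lhs => rw [← Nat.div_add_mod m 2]
  rw [pow_add, pow_mul, (show g ^ 2 = 1 by rw [pow_two, h]), one_pow, one_mul]

/-- the group `G = ⟨φ₁,φ₂,φ₃,φ₄⟩ ≅ D_p × D_p` acts transitively on the `p²`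
pairs `P_{ij}`, and the stabilizer of `P_{11}` is `⟨φ₁, φ₃⟩`, a Klein four group. -/
theorem stmt11 (p : ℕ) (hp : p.Prime) (hodd : Odd p) :
    (∀ i j k l : ZMod p, ∃ g ∈ Subgroup.closure {phi1 p, phi2 p, phi3 p, phi4 p},
      ⇑g '' pairP p i j = pairP p k l) ∧
    (∀ g ∈ Subgroup.closure {phi1 p, phi2 p, phi3 p, phi4 p},
      (⇑g '' pairP p 1 1 = pairP p 1 1 ↔ g ∈ Subgroup.closure {phi1 p, phi3 p})) ∧
    Nat.card ↥(Subgroup.closure {phi1 p, phi3 p}) = 4 ∧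
    Nonempty (↥(Subgroup.closure {phi1 p, phi3 p}) ≃* Multiplicative (ZMod 2 × ZMod 2)) := by
  haveI : Fact p.Prime := ⟨hp⟩
  have h2 : (2 : ZMod p) ≠ 0 := by
    intro h
    have hd : p ∣ 2 := by
      have := (ZMod.natCast_eq_zero_iff 2 p).mp (by exact_mod_cast h)
      exact this
    have hp2 : p = 2 := (Nat.prime_dvd_prime_iff_eq hp Nat.prime_two).mp hd
    rw [hp2] at hodd
    exact (Nat.odd_iff.mp hodd).symm.trans_ne (by norm_num) rfl
  have hcast : ∀ x : ZMod p, ((x.val : ℕ) : ZMod p) = x := fun x => by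
    rw [ZMod.natCast_val, ZMod.cast_id]
  refine ⟨?_, ?_, ?_⟩
  · -- transitivity
    intro i j k l
    have hσmem : phi4 p * phi3 p ∈ Subgroup.closure {phi1 p, phi2 p, phi3 p, phi4 p} :=
      mul_mem (Subgroup.subset_closure (by simp)) (Subgroup.subset_closure (by simp))
    have hτmem : phi2 p * phi1 p ∈ Subgroup.closure {phi1 p, phi2 p, phi3 p, phi4 p} :=
      mul_mem (Subgroup.subset_closure (by simp)) (Subgroup.subset_closure (by simp))
    set u : ZMod p := k - i with hu
    set v : ZMod p := l - j with hv
    set m : ZMod p := (u + v) / 2 with hm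
    set n : ZMod p := (v - u) / 2 with hn
    refine ⟨(phi4 p * phi3 p) ^ m.val * (phi2 p * phi1 p) ^ n.val,
      mul_mem (pow_mem hσmem _) (pow_mem hτmem _), ?_⟩
    rw [pairP, Set.image_pair]
    have e1 : ((phi4 p * phi3 p) ^ m.val * (phi2 p * phi1 p) ^ n.val) (false, i)
        = (false, k) := by
      rw [Equiv.Perm.mul_apply, tau_pow_false, sigma_pow, hcast, hcast]
      refine Prod.ext rfl ?_
      show i - n + m = k
      rw [hm, hn, hu, hv]; field_simp; ring
    have e2 : ((phi4 p * phi3 p) ^ m.val * (phi2 p * phi1 p) ^ n.val) (true, j)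
        = (true, l) := by
      rw [Equiv.Perm.mul_apply, tau_pow_true, sigma_pow, hcast, hcast]
      refine Prod.ext rfl ?_
      show j + n + m = l
      rw [hm, hn, hu, hv]; field_simp; ring
    rw [e1, e2]; rfl
  · -- stabilizer
    intro g hg
    constructor
    · -- forward: fixes P11 → in ⟨φ₁,φ₃⟩
      intro hfix
      obtain ⟨c, e, a, b, he, h1, h2⟩ := closure_le_aff p hg
      rw [pairP, Set.image_pair, h1, h2] at hfix
      have hmem1 : (c, e * 1 + a) ∈ ({(false, 1), (true, 1)} : Set (Bool × ZMod p)) := by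
        rw [← hfix]; exact Set.mem_insert _ _
      have hmem2 : (!c, e * 1 + b) ∈ ({(false, 1), (true, 1)} : Set (Bool × ZMod p)) := by
        rw [← hfix]; exact Set.mem_insert_of_mem _ rfl
      have hab : e + a = 1 ∧ e + b = 1 := by
        cases c with
        | false =>
          simp only [Set.mem_insert_iff, Set.mem_singleton_iff, Prod.mk.injEq,
            Bool.not_false, mul_one] at hmem1 hmem2
          constructor
          · rcases hmem1 with ⟨_, h⟩ | ⟨h, _⟩
            · exact h
            · exact absurd h (by simp)
          · rcases hmem2 with ⟨h, _⟩ | ⟨_, h⟩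
            · exact absurd h (by simp)
            · exact h
        | true =>
          simp only [Set.mem_insert_iff, Set.mem_singleton_iff, Prod.mk.injEq,
            Bool.not_true, mul_one] at hmem1 hmem2
          constructor
          · rcases hmem1 with ⟨h, _⟩ | ⟨_, h⟩
            · exact absurd h (by simp)
            · exact h
          · rcases hmem2 with ⟨_, h⟩ | ⟨h, _⟩
            · exact h
            · exact absurd h (by simp)
      have ha : a = 1 - e := by linear_combination hab.1
      have hb : b = 1 - e := by linear_combination hab.2
      rcases mul_self_eq_one_iff.mp he with he1 | he1
      case inl =>
       subst he1
       cases c with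
       | false =>
        have : g = 1 := by
          apply Equiv.ext; rintro ⟨bb, ii⟩
          cases bb
          · rw [h1]; simp [ha]
          · rw [h2]; simp [hb]
        rw [this]; exact one_mem _
       | true =>
        have : g = phi1 p := by
          apply Equiv.ext; rintro ⟨bb, ii⟩
          cases bb
          · rw [h1]; simp [ha, phi1, phi1fun]
          · rw [h2]; simp [hb, phi1, phi1fun]
        rw [this]; exact Subgroup.subset_closure (by simp)
      case inr =>
       subst he1
       cases c with
       | false =>
        have : g = phi1 p * phi3 p := by
          apply Equiv.ext; rintro ⟨bb, ii⟩
          cases bb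
          · rw [h1]
            simp only [Equiv.Perm.mul_apply, phi1, phi3, Function.Involutive.coe_toPerm,
              phi1fun, phi3fun, Bool.not_false, Bool.not_true, ha]
            exact Prod.ext rfl (by ring)
          · rw [h2]
            simp only [Equiv.Perm.mul_apply, phi1, phi3, Function.Involutive.coe_toPerm,
              phi1fun, phi3fun, Bool.not_false, Bool.not_true, hb]
            exact Prod.ext rfl (by ring)
        rw [this]
        exact mul_mem (Subgroup.subset_closure (by simp)) (Subgroup.subset_closure (by simp))
       | true =>
        have : g = phi3 p := by
          apply Equiv.ext; rintro ⟨bb, ii⟩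
          cases bb
          · rw [h1]
            simp only [phi3, Function.Involutive.coe_toPerm, phi3fun, Bool.not_false, ha]
            exact Prod.ext rfl (by ring)
          · rw [h2]
            simp only [phi3, Function.Involutive.coe_toPerm, phi3fun, Bool.not_true, hb]
            exact Prod.ext rfl (by ring)
        rw [this]; exact Subgroup.subset_closure (by simp)
    · -- reverse
      clear hg
      intro hmem
      induction hmem using Subgroup.closure_induction with
      | mem x hx =>
        rcases hx with rfl | rfl
        · rw [pairP, Set.image_pair]
          simp only [phi1, Function.Involutive.coe_toPerm, phi1fun, Bool.not_false,
            Bool.not_true]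
          exact Set.pair_comm _ _
        · rw [pairP, Set.image_pair]
          simp only [phi3, Function.Involutive.coe_toPerm, phi3fun, Bool.not_false,
            Bool.not_true]
          norm_num
          exact Set.pair_comm _ _
      | one => simp
      | mul x y hx hy ihx ihy =>
        rw [show ⇑(x * y) = ⇑x ∘ ⇑y from rfl, Set.image_comp, ihy, ihx]
      | inv x hx ihx =>
        conv_lhs => rw [← ihx, ← Set.image_comp]
        simp
  · -- Klein four group
    have v0 : (0 : ZMod 2).val = 0 := rfl
    have v1 : (1 : ZMod 2).val = 1 := rfl
    have c13 : Commute (phi3 p) (phi1 p) := (phi13_comm p).symm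
    let F : Multiplicative (ZMod 2 × ZMod 2) →* Equiv.Perm (Bool × ZMod p) :=
      { toFun := fun z => phi1 p ^ ((Multiplicative.toAdd z).1.val) *
          phi3 p ^ ((Multiplicative.toAdd z).2.val)
        map_one' := by simp
        map_mul' := fun x y => by
          simp only [toAdd_mul, Prod.fst_add, Prod.snd_add, ZMod.val_add]
          rw [← pow_mod_two (phi1_sq p), ← pow_mod_two (phi3_sq p), pow_add, pow_add,
            (c13.pow_pow ((Multiplicative.toAdd x).2.val)
              ((Multiplicative.toAdd y).1.val)).mul_mul_mul_comm] }
    have hF : ∀ z, F z = phi1 p ^ ((Multiplicative.toAdd z).1.val) *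
        phi3 p ^ ((Multiplicative.toAdd z).2.val) := fun z => rfl
    have hne1 : phi1 p ≠ 1 := by
      intro h
      have := Equiv.ext_iff.mp h (false, 0)
      simp [phi1, phi1fun] at this
    have hne3 : phi3 p ≠ 1 := by
      intro h
      have := Equiv.ext_iff.mp h (false, 0)
      simp [phi3, phi3fun] at this
    have hne13 : phi1 p * phi3 p ≠ 1 := by
      intro h
      have := Equiv.ext_iff.mp h (false, 0)
      simp only [Equiv.Perm.mul_apply, phi1, phi3, Function.Involutive.coe_toPerm,
        phi1fun, phi3fun, Bool.not_false, Bool.not_not, Equiv.Perm.one_apply,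
        Prod.mk.injEq, true_and, sub_zero] at this
      exact h2 this.2
    have hcases : ∀ t : ZMod 2, t = 0 ∨ t = 1 := by decide
    have hinj : Function.Injective F := by
      rw [injective_iff_map_eq_one]
      intro z hz
      rw [hF] at hz
      have hz0 : Multiplicative.toAdd z = 0 := by
        rcases hcases (Multiplicative.toAdd z).1 with ha | ha <;>
          rcases hcases (Multiplicative.toAdd z).2 with hb | hb <;>
          rw [ha, hb] at hz
        · exact Prod.ext ha hb
        · rw [v0, v1, pow_zero, pow_one, one_mul] at hz
          exact absurd hz hne3
        · rw [v0, v1, pow_zero, pow_one, mul_one] at hz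
          exact absurd hz hne1
        · rw [v1, pow_one] at hz
          exact absurd hz hne13
      rw [← ofAdd_toAdd z, hz0, ofAdd_zero]
    have hrange : F.range = Subgroup.closure {phi1 p, phi3 p} := by
      apply le_antisymm
      · rintro x ⟨z, rfl⟩
        exact mul_mem (pow_mem (Subgroup.subset_closure (by simp)) _)
          (pow_mem (Subgroup.subset_closure (by simp)) _)
      · rw [Subgroup.closure_le]
        rintro x (rfl | rfl)
        · exact ⟨Multiplicative.ofAdd (1, 0), by rw [hF]; simp [v0, v1]⟩
        · exact ⟨Multiplicative.ofAdd (0, 1), by rw [hF]; simp [v0, v1]⟩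
    have e2 : ↥(Subgroup.closure {phi1 p, phi3 p}) ≃* Multiplicative (ZMod 2 × ZMod 2) :=
      ((MonoidHom.ofInjective hinj).trans (MulEquiv.subgroupCongr hrange)).symm
    refine ⟨?_, ⟨e2⟩⟩
    rw [Nat.card_congr e2.toEquiv]
    rw [Nat.card_eq_fintype_card]
    rfl
end

section
/- Let p be an odd prime and consider G = D_p × D_p with generators σ₁ = (σ,1), τ₁ = (τ,1), σ₂ = (1,σ), τ₂ = (1,τ). For 1 ≤ j ≤ (p−1)/2, let L_j = ⟨σ₁^j σ₂, τ₁τ₂⟩. Then each L_j has order 2p (hence index 2p in G), has trivial normal core in G (i.e. the intersection of all conjugates of L_j is trivial), and the subgroups L_j for distinct j in {1, …,(p−1)/2} are pairwise non-conjugate in G. -/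
open DihedralGroup
open scoped Pointwise

/-- The subgroup `L_j = ⟨σ₁^j σ₂, τ₁τ₂⟩` of `D_p × D_p`, where `σ₁ = (σ,1)`, `σ₂ = (1,σ)`,
`τ₁ = (τ,1)`, `τ₂ = (1,τ)`; so `σ₁^j σ₂ = (σ^j, σ)` and `τ₁τ₂ = (τ, τ)`. -/
def Lsub (p j : ℕ) : Subgroup (DihedralGroup p × DihedralGroup p) :=
  Subgroup.closure {(r (j : ZMod p), r 1), (sr 0, sr 0)}

/-- The "multiply angles by j" endomorphism of the dihedral group. -/
def phiD (n : ℕ) (j : ZMod n) : DihedralGroup n →* DihedralGroup n where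
  toFun x := match x with
    | r m => r (j * m)
    | sr m => sr (j * m)
  map_one' := by rw [one_def]; show r _ = r 0; rw [mul_zero]
  map_mul' := by
    rintro (a | a) (b | b) <;>
      simp only [r_mul_r, r_mul_sr, sr_mul_r, sr_mul_sr] <;> ring_nf

/-- The graph homomorphism `x ↦ (phiD n j x, x)`. -/
def psiD (n : ℕ) (j : ZMod n) : DihedralGroup n →* DihedralGroup n × DihedralGroup n :=
  (phiD n j).prod (MonoidHom.id _)

lemma psiD_injective (n : ℕ) (j : ZMod n) : Function.Injective (psiD n j) :=
  fun _ _ h => congrArg Prod.snd h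

lemma Lsub_eq_range (p j : ℕ) [NeZero p] : Lsub p j = (psiD p (j : ZMod p)).range := by
  apply le_antisymm
  · apply Subgroup.closure_le _ |>.2
    rintro x (rfl | rfl)
    · exact ⟨r 1, by simp [psiD, phiD]⟩
    · exact ⟨sr 0, by simp [psiD, phiD]⟩
  · rintro x ⟨y, rfl⟩
    have h1 : (psiD p (j : ZMod p)) (r 1) ∈ Lsub p j := by
      apply Subgroup.subset_closure
      left
      simp [psiD, phiD]
    have h2 : (psiD p (j : ZMod p)) (sr 0) ∈ Lsub p j := by
      apply Subgroup.subset_closure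
      right
      simp [psiD, phiD]
    rcases y with m | m
    · have : (r m : DihedralGroup p) = (r 1) ^ m.val := by
        rw [r_one_pow, ZMod.natCast_val, ZMod.cast_id]
      rw [this, map_pow]
      exact pow_mem h1 _
    · have : (sr m : DihedralGroup p) = sr 0 * (r 1) ^ m.val := by
        rw [r_one_pow, ZMod.natCast_val, ZMod.cast_id, sr_mul_r, zero_add]
      rw [this, map_mul, map_pow]
      exact mul_mem h2 (pow_mem h1 _)

lemma mem_Lsub (p j : ℕ) [NeZero p] (x : DihedralGroup p × DihedralGroup p) :
    x ∈ Lsub p j ↔ phiD p (j : ZMod p) x.2 = x.1 := by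
  rw [Lsub_eq_range]
  constructor
  · rintro ⟨y, rfl⟩; rfl
  · intro h
    exact ⟨x.2, Prod.ext h rfl⟩

lemma cast_eq_of_le (p j k : ℕ) (hp : p.Prime) (hj1 : 1 ≤ j) (hj2 : j ≤ (p - 1) / 2)
    (hk1 : 1 ≤ k) (hk2 : k ≤ (p - 1) / 2) (h : (j : ZMod p) = (k : ZMod p)) : j = k := by
  have hp2 := hp.two_le
  rw [ZMod.natCast_eq_natCast_iff'] at h
  rw [Nat.mod_eq_of_lt (by omega), Nat.mod_eq_of_lt (by omega)] at h
  exact h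

lemma cast_ne_neg (p j k : ℕ) (hp : p.Prime) (hodd : Odd p) (hj1 : 1 ≤ j)
    (hj2 : j ≤ (p - 1) / 2) (hk1 : 1 ≤ k) (hk2 : k ≤ (p - 1) / 2)
    (h : (j : ZMod p) = -(k : ZMod p)) : False := by
  have hp2 := hp.two_le
  have : ((j + k : ℕ) : ZMod p) = 0 := by push_cast; rw [h]; ring
  rw [ZMod.natCast_eq_zero_iff] at this
  obtain ⟨r, hr⟩ := hodd
  have hjk : 0 < j + k := by omega
  have hjk2 : j + k < p := by omega
  exact absurd (Nat.le_of_dvd hjk this) (by omega)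

/-- For an odd prime `p` and `1 ≤ j ≤ (p−1)/2`, the subgroup
`L_j = ⟨σ₁^j σ₂, τ₁τ₂⟩` of `G = D_p × D_p` has order `2p` (hence index `2p` in `G`),
trivial normal core in `G`, and the `L_j` are pairwise non-conjugate in `G`. -/
theorem stmt18 (p : ℕ) (hp : p.Prime) (hodd : Odd p) :
    ∀ j : ℕ, 1 ≤ j → j ≤ (p - 1) / 2 →
      Nat.card ↥(Lsub p j) = 2 * p ∧
      (Lsub p j).index = 2 * p ∧
      (Lsub p j).normalCore = ⊥ ∧
      (∀ k : ℕ, 1 ≤ k → k ≤ (p - 1) / 2 → j ≠ k →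
        ∀ g : DihedralGroup p × DihedralGroup p, MulAut.conj g • Lsub p j ≠ Lsub p k) := by
  intro j hj1 hj2
  haveI : NeZero p := ⟨hp.pos.ne'⟩
  haveI : Fact p.Prime := ⟨hp⟩
  have hp2 := hp.two_le
  have hjp : j < p := by omega
  have h2ne : (2 : ZMod p) ≠ 0 := by
    intro h
    have : ((2 : ℕ) : ZMod p) = 0 := by push_cast; exact h
    rw [ZMod.natCast_eq_zero_iff] at this
    have := (Nat.prime_dvd_prime_iff_eq hp Nat.prime_two).1 this
    obtain ⟨r, hr⟩ := hodd
    omega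
  have hjne : ((j : ZMod p)) ≠ 0 := by
    intro h
    rw [ZMod.natCast_eq_zero_iff] at h
    exact absurd (Nat.le_of_dvd (by omega) h) (by omega)
  have hcard : Nat.card ↥(Lsub p j) = 2 * p := by
    rw [Lsub_eq_range]
    have := Nat.card_range_of_injective (psiD_injective p (j : ZMod p))
    rw [nat_card] at this
    exact this
  refine ⟨hcard, ?_, ?_, ?_⟩
  · -- index
    have h := Subgroup.card_mul_index (Lsub p j)
    rw [hcard, Nat.card_prod, nat_card] at h
    have hpos : 0 < 2 * p := by omega
    apply Nat.eq_of_mul_eq_mul_left hpos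
    rw [h]
  · -- normal core
    rw [eq_bot_iff]
    rintro ⟨x1, x2⟩ hx
    have hxL := (Lsub p j).normalCore_le hx
    rw [mem_Lsub] at hxL
    rcases x2 with m | m
    · -- rotation part: conjugate by (sr 0, 1)
      have hc := hx ((sr 0, 1) : DihedralGroup p × DihedralGroup p)
      rw [mem_Lsub] at hc
      have hx1 : x1 = r ((j : ZMod p) * m) := hxL.symm
      subst hx1
      have hinv : ((sr 0 : DihedralGroup p))⁻¹ = sr 0 := rfl
      simp only [Prod.mk_mul_mk, Prod.inv_mk, Prod.snd, Prod.fst, one_mul, inv_one, mul_one,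
        hinv, sr_mul_r, sr_mul_sr] at hc
      -- hc : phiD (r m) = sr 0 * r (j*m) * sr 0 = r (-(j*m))
      have : (r ((j : ZMod p) * m) : DihedralGroup p) = r (0 - (0 + (j : ZMod p) * m)) := hc
      rw [r.injEq] at this
      have hm : m = 0 := by
        have h2 : (2 : ZMod p) * ((j : ZMod p) * m) = 0 := by
          have := this
          ring_nf at this ⊢
          linear_combination this
        rcases mul_eq_zero.1 h2 with h | h
        · exact absurd h h2ne
        · rcases mul_eq_zero.1 h with h | h
          · exact absurd h hjne
          · exact h
      subst hm
      simp only [Subgroup.mem_bot, Prod.mk_eq_one, mul_zero]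
      exact ⟨by rw [one_def], by rw [one_def]⟩
    · -- reflection part: conjugate by (r 1, 1)
      exfalso
      have hc := hx ((r 1, 1) : DihedralGroup p × DihedralGroup p)
      rw [mem_Lsub] at hc
      have hx1 : x1 = sr ((j : ZMod p) * m) := hxL.symm
      subst hx1
      have hinv : ((r 1 : DihedralGroup p))⁻¹ = r (-1) := rfl
      simp only [Prod.mk_mul_mk, Prod.inv_mk, Prod.snd, Prod.fst, one_mul, inv_one, mul_one,
        hinv, r_mul_sr, sr_mul_r] at hc
      -- hc : phiD (sr m) = sr (j*m - 1 + -1)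
      have : (sr ((j : ZMod p) * m) : DihedralGroup p) = sr ((j : ZMod p) * m - 1 + -1) := hc
      rw [sr.injEq] at this
      apply h2ne
      linear_combination this
  · -- pairwise non-conjugate
    intro k hk1 hk2 hjk g heq
    have ha : ((r (j : ZMod p), r 1) : DihedralGroup p × DihedralGroup p) ∈ Lsub p j :=
      Subgroup.subset_closure (by left; rfl)
    have hb := Subgroup.smul_mem_pointwise_smul _ (MulAut.conj g) _ ha
    rw [heq] at hb
    have hbc : MulAut.conj g • ((r (j : ZMod p), r 1) : DihedralGroup p × DihedralGroup p)
        = g * (r (j : ZMod p), r 1) * g⁻¹ := rfl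
    rw [hbc, mem_Lsub] at hb
    obtain ⟨g1, g2⟩ := g
    have key : ∀ (h : DihedralGroup p) (m : ZMod p),
        h * r m * h⁻¹ = r m ∨ h * r m * h⁻¹ = r (-m) := by
      rintro (a | a) m
      · left
        have : ((r a : DihedralGroup p))⁻¹ = r (-a) := rfl
        rw [this, r_mul_r, r_mul_r]; ring_nf
      · right
        have : ((sr a : DihedralGroup p))⁻¹ = sr a := rfl
        rw [this, sr_mul_r, sr_mul_sr]; ring_nf
    simp only [Prod.mk_mul_mk, Prod.inv_mk, Prod.snd, Prod.fst] at hb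
    rcases key g1 (j : ZMod p) with h1 | h1 <;> rcases key g2 1 with h2 | h2 <;>
      rw [h1, h2] at hb <;>
      simp only [phiD, psiD, MonoidHom.coe_mk, OneHom.coe_mk, r.injEq] at hb
    · exact hjk (cast_eq_of_le p j k hp hj1 hj2 hk1 hk2 (by rw [← hb]; ring))
    · exact cast_ne_neg p j k hp hodd hj1 hj2 hk1 hk2 (by rw [← hb]; ring)
    · exact cast_ne_neg p j k hp hodd hj1 hj2 hk1 hk2 (by linear_combination hb)
    · exact hjk (cast_eq_of_le p j k hp hj1 hj2 hk1 hk2 (by linear_combination hb))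
end
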